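/- arXiv:2604.06544 — 2 statements merged into one kernel-verified Lean document; each statement's English description precedes it below -/
import Mathlib

section
/- For every pair of complex numbers p, q with p ≠ 0, there exists a nonzero complex number c such that conj(q) - p·conj(c)/c is not a real number. -/
open Complex

theorem stmt_3 (p q : ℂ) (hp : p ≠ 0) :
    ∃ c : ℂ, c ≠ 0 ∧ (starRingEnd ℂ q - p * starRingEnd ℂ c / c).im ≠ 0 := by
  by_cases h1 : (-q.im - p.im) ≠ 0
  · exact ⟨1, one_ne_zero, by simpa using h1⟩
  by_cases h2 : (-q.im + p.im) ≠ 0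
  · refine ⟨Complex.I, Complex.I_ne_zero, ?_⟩
    have : (starRingEnd ℂ Complex.I) / Complex.I = -1 := by
      simp [Complex.conj_I, div_eq_iff Complex.I_ne_zero]
    rw [mul_div_assoc, this]
    simpa using h2
  push_neg at h1 h2
  have hqi : q.im = 0 := by linarith
  have hpi : p.im = 0 := by linarith
  have hpr : p.re ≠ 0 := by
    intro h; exact hp (Complex.ext h hpi)
  refine ⟨1 + p.re * Complex.I, ?_, ?_⟩
  · intro h
    have := congrArg Complex.re h
    simp at this
  · have hd : ((1:ℝ) + p.re * p.re) ≠ 0 := ne_of_gt (by nlinarith [sq_nonneg p.re])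
    have hc : (1 + (p.re:ℂ) * Complex.I) ≠ 0 := by
      intro h; have := congrArg Complex.re h; simp at this
    -- compute im directly
    have : (starRingEnd ℂ q - p * starRingEnd ℂ (1 + p.re * Complex.I) / (1 + p.re * Complex.I)).im
        = 2 * p.re ^ 2 / (1 + p.re ^ 2) := by
      rw [Complex.sub_im, Complex.div_im]
      simp [Complex.normSq_apply, hpi, hqi]
      ring
    rw [this]
    positivity
end

section
/- Let a, q ∈ ℝ \ {0}, p ∈ ℂ \ {0}, and r ∈ ℕ. Assume q ∉ (1/2)ℤ and q + |p| ∉ (1/2)ℤ and q - |p| ∉ (1/2)ℤ. Then there exists C > 0 such that for all m ∈ (1/2)ℤ and all k ∈ ℤ, |(m + i·a·k^r - q)² - |p|²| ≥ C. -/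
open Complex

lemma half_dist_pos (x : ℝ) (hx : ¬∃ n : ℤ, x = n / 2) :
    0 < |2 * x - round (2 * x)| := by
  rw [abs_pos]
  intro h
  exact hx ⟨round (2 * x), by linarith⟩

lemma half_dist_le (x : ℝ) (n : ℤ) :
    |2 * x - round (2 * x)| / 2 ≤ |(n : ℝ) / 2 - x| := by
  have := round_le (2 * x) n
  have h : |(n : ℝ) / 2 - x| = |2 * x - n| / 2 := by
    rw [abs_sub_comm (2*x), show (n:ℝ) - 2*x = ((n:ℝ)/2 - x)*2 by ring, abs_mul]
    simp
  rw [h]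
  linarith

theorem stmt_7 (a q : ℝ) (ha : a ≠ 0) (hq0 : q ≠ 0) (p : ℂ) (hp : p ≠ 0) (r : ℕ)
    (h1 : ¬ ∃ n : ℤ, q = n / 2)
    (h2 : ¬ ∃ n : ℤ, q + ‖p‖ = n / 2)
    (h3 : ¬ ∃ n : ℤ, q - ‖p‖ = n / 2) :
    ∃ C : ℝ, 0 < C ∧ ∀ m : ℝ, (∃ n : ℤ, m = n / 2) → ∀ k : ℤ,
      C ≤ ‖((m : ℂ) + Complex.I * a * (k : ℂ) ^ r - q) ^ 2
            - (‖p‖ : ℂ) ^ 2‖ := by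
  set d1 := |2 * q - round (2 * q)| with hd1
  set d2 := |2 * (q + ‖p‖) - round (2 * (q + ‖p‖))| with hd2
  set d3 := |2 * (q - ‖p‖) - round (2 * (q - ‖p‖))| with hd3
  have hd1p := half_dist_pos q h1
  have hd2p := half_dist_pos _ h2
  have hd3p := half_dist_pos _ h3
  refine ⟨min (|a| * d1) (d2 / 2 * (d3 / 2)), ?_, ?_⟩
  · have := abs_pos.mpr ha
    positivity
  intro m hm k
  obtain ⟨n, rfl⟩ := hm
  have hmq : d1 / 2 ≤ |(n : ℝ) / 2 - q| := half_dist_le q n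
  set t : ℝ := (k : ℝ) ^ r with ht
  have hkc : (k : ℂ) ^ r = ((t : ℝ) : ℂ) := by rw [ht]; norm_cast
  by_cases hk : t = 0
  · have hΔ : ((((n:ℝ)/2 : ℝ) : ℂ) + Complex.I * a * (k : ℂ) ^ r - q) ^ 2
            - (‖p‖ : ℂ) ^ 2
        = (((((n:ℝ)/2 - q)^2 - (‖p‖)^2 : ℝ)) : ℂ) := by
      rw [hkc, hk]
      push_cast
      ring
    rw [hΔ, Complex.norm_real, Real.norm_eq_abs]
    have hfac : ((n:ℝ)/2 - q)^2 - (‖p‖)^2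
        = ((n:ℝ)/2 - (q + ‖p‖)) * ((n:ℝ)/2 - (q - ‖p‖)) := by ring
    rw [hfac, abs_mul]
    calc min (|a| * d1) (d2 / 2 * (d3 / 2)) ≤ d2 / 2 * (d3 / 2) := min_le_right _ _
      _ ≤ |(n:ℝ)/2 - (q + ‖p‖)| * |(n:ℝ)/2 - (q - ‖p‖)| := by
          apply mul_le_mul (half_dist_le _ n) (half_dist_le _ n) (by positivity) (abs_nonneg _)
  · have hkr : (1 : ℝ) ≤ |t| := by
      have hne : (k ^ r : ℤ) ≠ 0 := by
        intro h; apply hk; rw [ht]; exact_mod_cast congrArg (fun z : ℤ => (z : ℝ)) h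
      have h1' : (1 : ℤ) ≤ |k ^ r| := Int.one_le_abs hne
      calc (1:ℝ) ≤ |((k ^ r : ℤ) : ℝ)| := by exact_mod_cast h1'
        _ = |t| := by rw [ht]; push_cast; ring_nf
    set Δ := ((((n:ℝ)/2 : ℝ) : ℂ) + Complex.I * a * (k : ℂ) ^ r - q) ^ 2
            - (‖p‖ : ℂ) ^ 2 with hΔdef
    have him : Δ.im = 2 * ((n:ℝ)/2 - q) * (a * t) := by
      rw [hΔdef, hkc]
      simp [pow_two, Complex.mul_im, Complex.mul_re, Complex.sub_im,
        Complex.add_im, Complex.add_re, Complex.sub_re]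
      ring
    have habs : |Δ.im| ≤ ‖Δ‖ := Complex.abs_im_le_norm Δ
    calc min (|a| * d1) (d2 / 2 * (d3 / 2)) ≤ |a| * d1 := min_le_left _ _
      _ ≤ |a| * (2 * |(n:ℝ)/2 - q|) := by
          apply mul_le_mul_of_nonneg_left (by linarith) (abs_nonneg a)
      _ ≤ |a| * (2 * |(n:ℝ)/2 - q|) * |t| := le_mul_of_one_le_right (by positivity) hkr
      _ = |Δ.im| := by rw [him, abs_mul, abs_mul, abs_mul, _root_.abs_two]; ring
      _ ≤ ‖Δ‖ := habs
end
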